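/- (Lemma on moments) For every positive integer ℓ and every x ∈ ℝ^n, the ℓ-th moment of the acceptance ratio with respect to the proposal distribution satisfies ∫_{ℝ^n} η(z, x)^ℓ g(z) dz = 1/(N_ℓ · w(x)^ℓ); equivalently, ∫_{ℝ^n} w(z)^ℓ g(z) dz = 1/N_ℓ. -/

import Mathlib

open Matrix MeasureTheory Finset

lemma quadsub {n : ℕ} (M Q : Matrix (Fin n) (Fin n) ℝ) (y : Fin n → ℝ) :
    (M *ᵥ y) ⬝ᵥ (Q *ᵥ (M *ᵥ y)) = y ⬝ᵥ ((Mᵀ * Q * M) *ᵥ y) := by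
  rw [Matrix.mul_assoc, ← Matrix.mulVec_mulVec, Matrix.dotProduct_mulVec y,
    Matrix.vecMul_transpose, ← Matrix.mulVec_mulVec, Matrix.mulVec_mulVec]

lemma contquad {n : ℕ} (Q : Matrix (Fin n) (Fin n) ℝ) :
    Continuous fun z : Fin n → ℝ => z ⬝ᵥ (Q *ᵥ z) := by
  have h : (fun z : Fin n → ℝ => z ⬝ᵥ (Q *ᵥ z)) = fun z => ∑ i, z i * ∑ j, Q i j * z j := rfl
  rw [h]
  exact continuous_finset_sum _ fun i _ => (continuous_apply i).mul
    (continuous_finset_sum _ fun j _ => continuous_const.mul (continuous_apply j))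

lemma dotdiag {n : ℕ} (g : Fin n → ℝ) (y : Fin n → ℝ) :
    y ⬝ᵥ (Matrix.diagonal g *ᵥ y) = ∑ j, g j * y j ^ 2 := by
  simp only [dotProduct, Matrix.mulVec_diagonal]
  exact Finset.sum_congr rfl fun j _ => by ring

lemma diagkey {n : ℕ} (v : Fin n → Fin n → ℝ)
    (horth : ∀ i j, v i ⬝ᵥ v j = if i = j then (1 : ℝ) else 0)
    (t : Finset (Fin n)) (c : Fin n → ℝ) :
    (Matrix.of v) * (∑ j ∈ t, c j • vecMulVec (v j) (v j)) * (Matrix.of v)ᵀ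
      = Matrix.diagonal (fun p => if p ∈ t then c p else 0) := by
  classical
  rw [Finset.mul_sum, Finset.sum_mul]
  have h1 : ∀ j, (Matrix.of v) * (c j • vecMulVec (v j) (v j)) * (Matrix.of v)ᵀ
      = c j • vecMulVec (Matrix.of v *ᵥ v j) (Matrix.of v *ᵥ v j) := by
    intro j
    rw [Matrix.mul_smul, Matrix.smul_mul]
    congr 1
    ext p q
    simp only [Matrix.mul_apply, Matrix.vecMulVec_apply, Matrix.transpose_apply,
      Matrix.mulVec, dotProduct, Matrix.of_apply]
    conv_rhs => rw [Finset.sum_mul_sum]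
    simp only [Finset.sum_mul]
    rw [Finset.sum_comm]
    exact Finset.sum_congr rfl fun a _ => Finset.sum_congr rfl fun bb _ => by ring
  have h2 : ∀ j, Matrix.of v *ᵥ v j = fun p => if p = j then (1:ℝ) else 0 := by
    intro j; funext p
    simpa [Matrix.mulVec, Matrix.of_apply] using horth p j
  ext p q
  simp only [Matrix.sum_apply, h1, h2, Matrix.smul_apply, Matrix.vecMulVec_apply,
    smul_eq_mul, Matrix.diagonal_apply]
  have step : ∀ x ∈ t, c x * ((if p = x then (1:ℝ) else 0) * if q = x then 1 else 0)
      = if x = p then (if p = q then c p else 0) else 0 := by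
    intro x _
    by_cases h1 : x = p
    · subst h1
      by_cases h2 : x = q
      · subst h2; simp
      · have h2' : q ≠ x := fun h => h2 h.symm
        simp [h2, h2']
    · have h1' : ¬ p = x := fun h => h1 h.symm
      simp [h1, h1']
  rw [Finset.sum_congr rfl step, Finset.sum_ite_eq' t p]
  split_ifs with hq hp hp <;> simp_all



lemma rpow_neg_half_sq (a : ℝ) (ha : 0 < a) : (a ^ 2 : ℝ) ^ (-(1:ℝ)/2) = a⁻¹ := by
  rw [← Real.rpow_natCast a 2, ← Real.rpow_mul ha.le]
  norm_num
  exact Real.rpow_neg_one a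


lemma gauss1 (a d c : ℝ) (hd : 0 < d) (ha : 0 ≤ a) :
    (∫ y : ℝ, Real.exp (-(1/2) * (a * y ^ 2 + d * (y - c) ^ 2)))
      = Real.sqrt (2 * Real.pi / (d + a)) * Real.exp (-(d * a * c ^ 2 / (2 * (d + a)))) := by
  have hda : (0:ℝ) < d + a := by linarith
  have h1 : ∀ y : ℝ, -(1/2) * (a * y ^ 2 + d * (y - c) ^ 2)
      = -((d+a)/2) * (y - d * c / (d+a)) ^ 2 + (-(d * a * c ^ 2 / (2 * (d + a)))) := by
    intro y; field_simp; ring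
  simp_rw [h1, Real.exp_add, integral_mul_const]
  congr 1
  rw [integral_sub_right_eq_self (fun y : ℝ => Real.exp (-((d+a)/2) * y ^ 2)) (d * c / (d+a))]
  rw [integral_gaussian]
  congr 1
  rw [div_div_eq_mul_div, mul_comm]

lemma expaux (s u lj q el : ℝ) (hs : 0 < s) (hden : 0 < el*u*lj + s) :
    -(s * (el * (u * lj)) * (u * (s⁻¹ * q)) ^ 2 / (2 * (s + el * (u * lj))))
      = -(u ^ 2 / (2 * s) * (el * u * lj / (el * u * lj + s)) * q ^ 2) := by
  rw [neg_inj]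
  have h2 : s + el * (u * lj) ≠ 0 := by nlinarith
  have h3 : el * u * lj + s ≠ 0 := hden.ne'
  field_simp
  linear_combination (el * u ^ 3 * lj * q ^ 2) * mul_inv_cancel₀ h3


set_option maxHeartbeats 1000000 in
open Matrix MeasureTheory ProbabilityTheory Finset

noncomputable section

theorem stmt9
    (m n : ℕ) (hm : 0 < m) (hn : 0 < n)
    (A : Matrix (Fin m) (Fin n) ℝ) (L : Matrix (Fin n) (Fin n) ℝ) (hL : IsUnit L.det)
    (μ σ : ℝ) (hμ : 0 < μ) (hσ : 0 < σ)
    (b : Fin m → ℝ)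
    (v : Fin n → Fin n → ℝ) (lam : Fin n → ℝ)
    (horth : ∀ i j, v i ⬝ᵥ v j = if i = j then (1 : ℝ) else 0)
    (hlam_nonneg : ∀ j, 0 ≤ lam j) (hlam_anti : Antitone lam)
    (hHdecomp : (L⁻¹)ᵀ * Aᵀ * A * L⁻¹ = ∑ j, lam j • vecMulVec (v j) (v j))
    (k : ℕ) (hk : k ≤ n)
    (Γcond : Matrix (Fin n) (Fin n) ℝ)
    (hΓcond : Γcond = (μ • (Aᵀ * A) + σ • (Lᵀ * L))⁻¹)
    (Γhat : Matrix (Fin n) (Fin n) ℝ)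
    (hΓhat : Γhat = L⁻¹ * (σ • (1 : Matrix (Fin n) (Fin n) ℝ) +
        μ • ∑ j ∈ Finset.univ.filter (fun j : Fin n => (j : ℕ) < k),
          lam j • vecMulVec (v j) (v j))⁻¹ * (L⁻¹)ᵀ)
    (xhat : Fin n → ℝ) (hxhat : xhat = μ • (Γhat *ᵥ (Aᵀ *ᵥ b)))
    (w : (Fin n → ℝ) → ℝ)
    (hw : ∀ x, w x = Real.exp (-(1/2) * (x ⬝ᵥ ((Γcond⁻¹ - Γhat⁻¹) *ᵥ x))))
    (η : (Fin n → ℝ) → (Fin n → ℝ) → ℝ)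
    (hη : ∀ z x, η z x = w z / w x)
    (gfun : (Fin n → ℝ) → ℝ)
    (hgfun : ∀ x, gfun x = (2 * Real.pi) ^ (-(n : ℝ) / 2) * Γhat.det ^ (-(1 : ℝ) / 2) *
        Real.exp (-(1/2) * ((x - xhat) ⬝ᵥ (Γhat⁻¹ *ᵥ (x - xhat)))))
    (N : ℕ → ℝ)
    (hN : ∀ ℓ : ℕ, N ℓ = Real.exp ((μ ^ 2 / (2 * σ)) *
        ∑ j ∈ Finset.univ.filter (fun j : Fin n => k ≤ (j : ℕ)),
          (((ℓ : ℝ) * μ * lam j) / ((ℓ : ℝ) * μ * lam j + σ)) *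
            (b ⬝ᵥ (A *ᵥ (L⁻¹ *ᵥ v j))) ^ 2) *
      ∏ j ∈ Finset.univ.filter (fun j : Fin n => k ≤ (j : ℕ)),
        Real.sqrt (1 + (ℓ : ℝ) * μ * lam j / σ))
    :
    ∀ ℓ : ℕ, 0 < ℓ → ∀ x : Fin n → ℝ,
      (∫ z : Fin n → ℝ, η z x ^ ℓ * gfun z) = 1 / (N ℓ * w x ^ ℓ) ∧
      (∫ z : Fin n → ℝ, w z ^ ℓ * gfun z) = 1 / N ℓ := by
  classical
  have hdetL : L.det ≠ 0 := hL.ne_zero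
  set V : Matrix (Fin n) (Fin n) ℝ := Matrix.of v with hVdef
  have hVVT : V * Vᵀ = 1 := by
    ext i j
    simpa [hVdef, Matrix.mul_apply, Matrix.one_apply, dotProduct] using horth i j
  have hVTV : Vᵀ * V = 1 := mul_eq_one_comm.mp hVVT
  have hdetV2 : V.det * V.det = 1 := by
    have := congrArg Matrix.det hVVT
    rwa [Matrix.det_mul, Matrix.det_transpose, Matrix.det_one] at this
  have hdetV : V.det ≠ 0 := by
    intro h; rw [h, zero_mul] at hdetV2; exact zero_ne_one hdetV2
  -- diagonal entries
  set dv : Fin n → ℝ := fun j => σ + μ * (if (j:ℕ) < k then lam j else 0) with hdv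
  set ev : Fin n → ℝ := fun j => if (j:ℕ) < k then 0 else μ * lam j with hev
  have hdvpos : ∀ j, 0 < dv j := by
    intro j; rw [hdv]; dsimp only; split
    · nlinarith [hlam_nonneg j]
    · simpa using hσ
  have hevnn : ∀ j, 0 ≤ ev j := by
    intro j; rw [hev]; dsimp only; split
    · exact le_refl 0
    · exact mul_nonneg hμ.le (hlam_nonneg j)
  -- B and its diagonalization
  set Sk : Matrix (Fin n) (Fin n) ℝ :=
    ∑ j ∈ Finset.univ.filter (fun j : Fin n => (j : ℕ) < k), lam j • vecMulVec (v j) (v j) with hSk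
  set B : Matrix (Fin n) (Fin n) ℝ := σ • (1 : Matrix (Fin n) (Fin n) ℝ) + μ • Sk with hB
  have hVBVT : V * B * Vᵀ = Matrix.diagonal dv := by
    have hd := diagkey v horth (Finset.univ.filter (fun j : Fin n => (j : ℕ) < k)) lam
    rw [hB, Matrix.mul_add, Matrix.add_mul, Matrix.mul_smul, Matrix.smul_mul,
      Matrix.mul_smul, Matrix.smul_mul, Matrix.mul_one, hVVT]
    rw [hSk, hd]
    ext p q
    by_cases hpq : p = q <;>
      simp [Matrix.diagonal_apply, hpq, Matrix.one_apply, hdv, mul_ite]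
  have hBsym : B = Vᵀ * Matrix.diagonal dv * V := by
    calc B = (Vᵀ * V) * B * (Vᵀ * V) := by rw [hVTV, Matrix.one_mul, Matrix.mul_one]
    _ = Vᵀ * (V * B * Vᵀ) * V := by simp only [Matrix.mul_assoc]
    _ = Vᵀ * Matrix.diagonal dv * V := by rw [hVBVT]
  set Binv : Matrix (Fin n) (Fin n) ℝ := Vᵀ * Matrix.diagonal (fun j => (dv j)⁻¹) * V with hBinvdef
  have hBBinv : B * Binv = 1 := by
    rw [hBsym, hBinvdef]
    calc Vᵀ * Matrix.diagonal dv * V * (Vᵀ * Matrix.diagonal (fun j => (dv j)⁻¹) * V)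
        = Vᵀ * (Matrix.diagonal dv * (V * Vᵀ) * Matrix.diagonal (fun j => (dv j)⁻¹)) * V := by
          simp only [Matrix.mul_assoc]
      _ = 1 := by
          rw [hVVT, Matrix.mul_one, Matrix.diagonal_mul_diagonal]
          have : (fun j => dv j * (dv j)⁻¹) = fun _ => (1:ℝ) := by
            funext j; exact mul_inv_cancel₀ (hdvpos j).ne'
          rw [this, Matrix.diagonal_one, Matrix.mul_one, hVTV]
  have hBinv : B⁻¹ = Binv := Matrix.inv_eq_right_inv hBBinv
  -- L facts
  have hLinvL : L⁻¹ * L = 1 := Matrix.nonsing_inv_mul L hL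
  have hLLinv : L * L⁻¹ = 1 := Matrix.mul_nonsing_inv L hL
  have hLiTLT : (L⁻¹)ᵀ * Lᵀ = 1 := by rw [← Matrix.transpose_mul, hLLinv, Matrix.transpose_one]
  have hLTLiT : Lᵀ * (L⁻¹)ᵀ = 1 := by rw [← Matrix.transpose_mul, hLinvL, Matrix.transpose_one]
  set M : Matrix (Fin n) (Fin n) ℝ := L⁻¹ * Vᵀ with hM
  have hMT : Mᵀ = V * (L⁻¹)ᵀ := by rw [hM, Matrix.transpose_mul, Matrix.transpose_transpose]
  have hdetLinv : (L⁻¹).det ≠ 0 := by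
    rw [Matrix.det_nonsing_inv, Ring.inverse_eq_inv]; exact inv_ne_zero hdetL
  have hMdet : M.det ≠ 0 := by
    rw [hM, Matrix.det_mul, Matrix.det_transpose]; exact mul_ne_zero hdetLinv hdetV
  have conj : ∀ (Z : Matrix (Fin n) (Fin n) ℝ), Mᵀ * (Lᵀ * Z * L) * M = V * Z * Vᵀ := by
    intro Z
    rw [hMT, hM]
    calc V * (L⁻¹)ᵀ * (Lᵀ * Z * L) * (L⁻¹ * Vᵀ)
        = V * ((L⁻¹)ᵀ * Lᵀ) * Z * (L * L⁻¹) * Vᵀ := by simp only [Matrix.mul_assoc]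
      _ = V * Z * Vᵀ := by rw [hLiTLT, hLLinv, Matrix.mul_one, Matrix.mul_one]
  -- Γhat forms
  have hGhat2 : Γhat = L⁻¹ * Binv * (L⁻¹)ᵀ := by rw [hΓhat, hBinv]
  have hGhat3 : Γhat = M * Matrix.diagonal (fun j => (dv j)⁻¹) * Mᵀ := by
    rw [hGhat2, hBinvdef, hM, hMT]; simp only [Matrix.mul_assoc]
  have hGhatinv : Γhat⁻¹ = Lᵀ * B * L := by
    apply Matrix.inv_eq_right_inv
    rw [hGhat2]
    calc L⁻¹ * Binv * (L⁻¹)ᵀ * (Lᵀ * B * L)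
        = L⁻¹ * (Binv * ((L⁻¹)ᵀ * Lᵀ) * B) * L := by simp only [Matrix.mul_assoc]
      _ = 1 := by
          rw [hLiTLT, Matrix.mul_one, mul_eq_one_comm.mp hBBinv, Matrix.mul_one, hLinvL]
  -- A^T A
  have hATA : Aᵀ * A = Lᵀ * (∑ j, lam j • vecMulVec (v j) (v j)) * L := by
    have h := congrArg (fun Z => Lᵀ * Z * L) hHdecomp
    rw [← h]
    symm
    calc Lᵀ * ((L⁻¹)ᵀ * Aᵀ * A * L⁻¹) * L
        = Lᵀ * (L⁻¹)ᵀ * (Aᵀ * A) * (L⁻¹ * L) := by simp only [Matrix.mul_assoc]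
      _ = Aᵀ * A := by rw [hLTLiT, hLinvL, Matrix.one_mul, Matrix.mul_one]
  set Hm : Matrix (Fin n) (Fin n) ℝ := ∑ j, lam j • vecMulVec (v j) (v j) with hHmdef
  set C : Matrix (Fin n) (Fin n) ℝ := σ • (1 : Matrix (Fin n) (Fin n) ℝ) + μ • Hm with hC
  set sv : Fin n → ℝ := fun j => σ + μ * lam j with hsv
  have hsvpos : ∀ j, 0 < sv j := by
    intro j; rw [hsv]; dsimp only; nlinarith [hlam_nonneg j]
  have hVCVT : V * C * Vᵀ = Matrix.diagonal sv := by
    have hHuniv : Hm = ∑ j ∈ Finset.univ, lam j • vecMulVec (v j) (v j) := rfl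
    have hd := diagkey v horth Finset.univ lam
    rw [hC, Matrix.mul_add, Matrix.add_mul, Matrix.mul_smul, Matrix.smul_mul,
      Matrix.mul_smul, Matrix.smul_mul, Matrix.mul_one, hVVT, hHuniv, hd]
    ext p q
    by_cases hpq : p = q <;>
      simp [Matrix.diagonal_apply, hpq, Matrix.one_apply, hsv, mul_ite]
  have hCsym : C = Vᵀ * Matrix.diagonal sv * V := by
    calc C = (Vᵀ * V) * C * (Vᵀ * V) := by rw [hVTV, Matrix.one_mul, Matrix.mul_one]
    _ = Vᵀ * (V * C * Vᵀ) * V := by simp only [Matrix.mul_assoc]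
    _ = Vᵀ * Matrix.diagonal sv * V := by rw [hVCVT]
  set Cinv : Matrix (Fin n) (Fin n) ℝ := Vᵀ * Matrix.diagonal (fun j => (sv j)⁻¹) * V with hCinvdef
  have hCCinv : C * Cinv = 1 := by
    rw [hCsym, hCinvdef]
    calc Vᵀ * Matrix.diagonal sv * V * (Vᵀ * Matrix.diagonal (fun j => (sv j)⁻¹) * V)
        = Vᵀ * (Matrix.diagonal sv * (V * Vᵀ) * Matrix.diagonal (fun j => (sv j)⁻¹)) * V := by
          simp only [Matrix.mul_assoc]
      _ = 1 := by
          rw [hVVT, Matrix.mul_one, Matrix.diagonal_mul_diagonal]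
          have : (fun j => sv j * (sv j)⁻¹) = fun _ => (1:ℝ) := by
            funext j; exact mul_inv_cancel₀ (hsvpos j).ne'
          rw [this, Matrix.diagonal_one, Matrix.mul_one, hVTV]
  have hXeq : μ • (Aᵀ * A) + σ • (Lᵀ * L) = Lᵀ * C * L := by
    rw [hATA, hC, Matrix.mul_add, Matrix.add_mul, Matrix.mul_smul, Matrix.smul_mul,
      Matrix.mul_smul, Matrix.smul_mul, Matrix.mul_one]
    simp only [Matrix.mul_assoc]
    exact add_comm _ _
  have hLTunit : IsUnit Lᵀ.det := by rwa [Matrix.det_transpose]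
  have hXright : (Lᵀ * C * L) * (L⁻¹ * Cinv * (Lᵀ)⁻¹) = 1 := by
    calc (Lᵀ * C * L) * (L⁻¹ * Cinv * (Lᵀ)⁻¹)
        = Lᵀ * (C * (L * L⁻¹) * Cinv) * (Lᵀ)⁻¹ := by simp only [Matrix.mul_assoc]
      _ = 1 := by
          rw [hLLinv, Matrix.mul_one, hCCinv, Matrix.mul_one, Matrix.mul_nonsing_inv _ hLTunit]
  have hXunit : IsUnit (μ • (Aᵀ * A) + σ • (Lᵀ * L)).det := by
    rw [hXeq]; exact Matrix.isUnit_det_of_right_inverse hXright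
  have hGcondinv : Γcond⁻¹ = Lᵀ * C * L := by
    rw [hΓcond, Matrix.nonsing_inv_nonsing_inv _ hXunit, hXeq]
  -- the difference matrix
  set Sc : Matrix (Fin n) (Fin n) ℝ :=
    ∑ j ∈ Finset.univ.filter (fun j : Fin n => ¬ (j : ℕ) < k), lam j • vecMulVec (v j) (v j)
    with hScdef
  have hsplit : Sk + Sc = Hm :=
    Finset.sum_filter_add_sum_filter_not Finset.univ _ _
  have hCB : C - B = μ • Sc := by
    rw [hC, hB, ← hsplit, smul_add]; abel
  have hDm : Γcond⁻¹ - Γhat⁻¹ = Lᵀ * (μ • Sc) * L := by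
    rw [hGcondinv, hGhatinv, ← hCB, Matrix.mul_sub, Matrix.sub_mul]
  have hVScVT : V * (μ • Sc) * Vᵀ = Matrix.diagonal ev := by
    have hd := diagkey v horth (Finset.univ.filter (fun j : Fin n => ¬ (j : ℕ) < k)) lam
    rw [Matrix.mul_smul, Matrix.smul_mul, hScdef, hd]
    ext p q
    by_cases hpq : p = q
    · subst hpq
      by_cases hq : (p:ℕ) < k <;>
        simp [Matrix.diagonal_apply, hev, hq, Finset.mem_filter, smul_eq_mul]
    · simp [Matrix.diagonal_apply, hpq]
  have hMDM : Mᵀ * (Γcond⁻¹ - Γhat⁻¹) * M = Matrix.diagonal ev := by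
    rw [hDm, conj]; exact hVScVT
  have hMGM : Mᵀ * Γhat⁻¹ * M = Matrix.diagonal dv := by
    rw [hGhatinv, conj]; exact hVBVT
  -- determinant of Γhat
  have hdetGhat : Γhat.det = M.det ^ 2 * ∏ j, (dv j)⁻¹ := by
    rw [hGhat3, Matrix.det_mul, Matrix.det_mul, Matrix.det_transpose, Matrix.det_diagonal]
    ring
  have habsM : (0:ℝ) < |M.det| := abs_pos.mpr hMdet
  have hGdet2 : Γhat.det = ((|M.det|⁻¹ * ∏ j, Real.sqrt (dv j))⁻¹) ^ 2 := by
    rw [hdetGhat, mul_inv, inv_inv, mul_pow, sq_abs, ← Finset.prod_inv_distrib,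
      ← Finset.prod_pow]
    congr 1
    exact Finset.prod_congr rfl fun j _ => by rw [inv_pow, Real.sq_sqrt (hdvpos j).le]
  have hSpos : 0 < |M.det|⁻¹ * ∏ j, Real.sqrt (dv j) :=
    mul_pos (inv_pos.mpr habsM) (Finset.prod_pos fun j _ => Real.sqrt_pos.mpr (hdvpos j))
  have hrpow : Γhat.det ^ (-(1:ℝ)/2) = |M.det|⁻¹ * ∏ j, Real.sqrt (dv j) := by
    rw [hGdet2, rpow_neg_half_sq _ (inv_pos.mpr hSpos), inv_inv]
  -- mean vector in new coordinates
  set cc : Fin n → ℝ := fun j => v j ⬝ᵥ ((L⁻¹)ᵀ *ᵥ (Aᵀ *ᵥ b)) with hccdef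
  set yh : Fin n → ℝ := fun j => μ * ((dv j)⁻¹ * cc j) with hyhdef
  have hMTu : Mᵀ *ᵥ (Aᵀ *ᵥ b) = cc := by
    rw [hMT, ← Matrix.mulVec_mulVec]
    funext j
    simp [hVdef, Matrix.mulVec, dotProduct, hccdef]
  have hxh : xhat = M *ᵥ yh := by
    rw [hxhat, hGhat3, ← Matrix.mulVec_mulVec, ← Matrix.mulVec_mulVec, hMTu,
      ← Matrix.mulVec_smul]
    have hyy : μ • ((Matrix.diagonal fun j => (dv j)⁻¹) *ᵥ cc) = yh := by
      funext j
      simp [Matrix.mulVec_diagonal, hyhdef]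
    rw [hyy]
  have hccj : ∀ j, cc j = b ⬝ᵥ (A *ᵥ (L⁻¹ *ᵥ v j)) := by
    intro j
    rw [hccdef]
    simp only [Matrix.dotProduct_mulVec, Matrix.mulVec_transpose, Matrix.vecMul_vecMul]
    exact dotProduct_comm _ _
  -- now the analysis
  intro ℓ hℓ x
  have h2pi : (0:ℝ) < 2 * Real.pi := by positivity
  set Ee : Fin n → ℝ := fun j => dv j + (ℓ:ℝ) * ev j with hEe
  set XX : Fin n → ℝ := fun j =>
    Real.exp (-(dv j * ((ℓ:ℝ) * ev j) * yh j ^ 2 / (2*(dv j + (ℓ:ℝ) * ev j)))) with hXX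
  have hEpos : ∀ j, 0 < Ee j := by
    intro j
    rw [hEe]; dsimp only
    have h0 : (0:ℝ) ≤ (ℓ:ℝ) * ev j := mul_nonneg (Nat.cast_nonneg ℓ) (hevnn j)
    linarith [hdvpos j]
  have hwpos : ∀ z, 0 < w z := fun z => by rw [hw]; exact Real.exp_pos _
  have hcontw : Continuous w := by
    have hfun : w = fun z => Real.exp (-(1/2) * (z ⬝ᵥ ((Γcond⁻¹ - Γhat⁻¹) *ᵥ z))) := funext hw
    rw [hfun]
    exact Real.continuous_exp.comp (continuous_const.mul (contquad _))
  have hcontg : Continuous gfun := by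
    have hfun : gfun = fun z => (2 * Real.pi) ^ (-(n : ℝ) / 2) * Γhat.det ^ (-(1 : ℝ) / 2) *
        Real.exp (-(1/2) * ((z - xhat) ⬝ᵥ (Γhat⁻¹ *ᵥ (z - xhat)))) := funext hgfun
    rw [hfun]
    exact continuous_const.mul (Real.continuous_exp.comp (continuous_const.mul
      ((contquad _).comp (continuous_id.sub continuous_const))))
  have hcontf : Continuous fun z : Fin n → ℝ => w z ^ ℓ * gfun z := (hcontw.pow ℓ).mul hcontg
  -- change of variables
  have hcov : (∫ z, w z ^ ℓ * gfun z) = |M.det| * ∫ y, w (M *ᵥ y) ^ ℓ * gfun (M *ᵥ y) := by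
    have hmap := Real.map_matrix_volume_pi_eq_smul_volume_pi (M := M) hMdet
    have h1 : (∫ z, w z ^ ℓ * gfun z ∂(Measure.map (Matrix.toLin' M) volume))
        = ∫ y, w (M *ᵥ y) ^ ℓ * gfun (M *ᵥ y) := by
      rw [integral_map (Continuous.aemeasurable (LinearMap.continuous_on_pi _))
        hcontf.aestronglyMeasurable]
      simp_rw [Matrix.toLin'_apply]
    rw [← h1, hmap, integral_smul_measure, ENNReal.toReal_ofReal (by positivity),
      smul_eq_mul, ← mul_assoc, abs_inv, mul_inv_cancel₀ (ne_of_gt habsM), one_mul]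
  -- pointwise product form
  have hpt : ∀ y : Fin n → ℝ, w (M *ᵥ y) ^ ℓ * gfun (M *ᵥ y)
      = (2 * Real.pi) ^ (-(n : ℝ)/2) * Γhat.det ^ (-(1:ℝ)/2) *
        ∏ j, Real.exp (-(1/2) * ((ℓ:ℝ) * ev j * (y j)^2 + dv j * (y j - yh j)^2)) := by
    intro y
    rw [hw, hgfun]
    have hq1 : (M *ᵥ y) ⬝ᵥ ((Γcond⁻¹ - Γhat⁻¹) *ᵥ (M *ᵥ y)) = ∑ j, ev j * (y j)^2 := by
      rw [quadsub, hMDM, dotdiag]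
    have hq2 : (M *ᵥ y - xhat) ⬝ᵥ (Γhat⁻¹ *ᵥ (M *ᵥ y - xhat))
        = ∑ j, dv j * (y j - yh j)^2 := by
      rw [hxh, ← Matrix.mulVec_sub, quadsub, hMGM, dotdiag]
      exact Finset.sum_congr rfl fun j _ => by simp [Pi.sub_apply]
    rw [hq1, hq2, ← Real.exp_nat_mul]
    have hsum : (ℓ:ℝ) * (-(1/2) * ∑ j, ev j * (y j)^2) + (-(1/2) * ∑ j, dv j * (y j - yh j)^2)
        = ∑ j, -(1/2) * ((ℓ:ℝ) * ev j * (y j)^2 + dv j * (y j - yh j)^2) := by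
      rw [Finset.mul_sum, Finset.mul_sum, Finset.mul_sum, ← Finset.sum_add_distrib]
      exact Finset.sum_congr rfl fun j _ => by ring
    rw [← Real.exp_sum _ (fun j => -(1/2) * ((ℓ:ℝ) * ev j * (y j)^2 + dv j * (y j - yh j)^2)),
      ← hsum, Real.exp_add]
    ring
  -- integrate
  have hint : (∫ y : Fin n → ℝ, w (M *ᵥ y) ^ ℓ * gfun (M *ᵥ y))
      = (2 * Real.pi) ^ (-(n : ℝ)/2) * Γhat.det ^ (-(1:ℝ)/2) *
        ∏ j, (Real.sqrt (2*Real.pi/Ee j) * XX j) := by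
    simp_rw [hpt]
    rw [MeasureTheory.integral_const_mul]
    congr 1
    rw [MeasureTheory.integral_fintype_prod_volume_eq_prod (ι := Fin n)
      (fun j s => Real.exp (-(1/2) * ((ℓ:ℝ) * ev j * s^2 + dv j * (s - yh j)^2)))]
    refine Finset.prod_congr rfl fun j _ => ?_
    simp only [hXX, hEe]
    exact gauss1 ((ℓ:ℝ) * ev j) (dv j) (yh j) (hdvpos j)
      (mul_nonneg (Nat.cast_nonneg ℓ) (hevnn j))
  have hpow2pi : (2*Real.pi) ^ (-(n:ℝ)/2) * Real.sqrt (2*Real.pi) ^ n = 1 := by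
    rw [Real.sqrt_eq_rpow, ← Real.rpow_natCast ((2*Real.pi) ^ ((1:ℝ)/2)) n,
      ← Real.rpow_mul h2pi.le, ← Real.rpow_add h2pi,
      show -(n:ℝ)/2 + 1/2 * (n:ℝ) = 0 by ring, Real.rpow_zero]
  have hMM : |M.det| * |M.det|⁻¹ = 1 := mul_inv_cancel₀ (ne_of_gt habsM)
  have hprod1 : |M.det| * ((2 * Real.pi) ^ (-(n : ℝ)/2) * Γhat.det ^ (-(1:ℝ)/2) *
      ∏ j, (Real.sqrt (2*Real.pi/Ee j) * XX j))
      = ∏ j, (Real.sqrt (dv j / Ee j) * XX j) := by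
    rw [hrpow]
    have hstep : ∀ j, Real.sqrt (dv j) * (Real.sqrt (2*Real.pi/Ee j) * XX j)
        = Real.sqrt (2*Real.pi) * (Real.sqrt (dv j / Ee j) * XX j) := by
      intro j
      rw [Real.sqrt_div h2pi.le, Real.sqrt_div (hdvpos j).le]
      ring
    have hp1 : ∏ j, (Real.sqrt (dv j) * (Real.sqrt (2*Real.pi/Ee j) * XX j))
        = ∏ j, (Real.sqrt (2*Real.pi) * (Real.sqrt (dv j/Ee j) * XX j)) :=
      Finset.prod_congr rfl fun j _ => hstep j
    have expand : |M.det| * ((2*Real.pi)^(-(n:ℝ)/2) * (|M.det|⁻¹ * ∏ j, Real.sqrt (dv j)) *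
        ∏ j, (Real.sqrt (2*Real.pi/Ee j) * XX j))
        = (|M.det| * |M.det|⁻¹) * ((2*Real.pi)^(-(n:ℝ)/2) *
          ∏ j, (Real.sqrt (dv j) * (Real.sqrt (2*Real.pi/Ee j) * XX j))) := by
      simp only [Finset.prod_mul_distrib]
      ring
    rw [expand, hp1, hMM, one_mul]
    have expand2 : ∏ j, (Real.sqrt (2*Real.pi) * (Real.sqrt (dv j/Ee j) * XX j))
        = Real.sqrt (2*Real.pi) ^ n * ∏ j, (Real.sqrt (dv j/Ee j) * XX j) := by
      simp only [Finset.prod_mul_distrib, Finset.prod_const, Finset.card_univ, Fintype.card_fin]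
    rw [expand2, ← mul_assoc, hpow2pi, one_mul]
  have hstepE : ∏ j, (Real.sqrt (dv j / Ee j) * XX j) = 1 / N ℓ := by
    have hfilters : Finset.univ.filter (fun j : Fin n => ¬ (j:ℕ) < k)
        = Finset.univ.filter (fun j : Fin n => k ≤ (j:ℕ)) := by
      apply Finset.filter_congr
      intro j _
      simp [not_lt]
    rw [← Finset.prod_filter_mul_prod_filter_not Finset.univ (fun j : Fin n => (j:ℕ) < k)]
    have h1 : ∏ j ∈ Finset.univ.filter (fun j : Fin n => (j:ℕ) < k),
        (Real.sqrt (dv j / Ee j) * XX j) = 1 := by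
      apply Finset.prod_eq_one
      intro j hj
      have hjk : (j:ℕ) < k := (Finset.mem_filter.mp hj).2
      have he0 : ev j = 0 := by rw [hev]; simp [hjk]
      simp only [hXX, hEe]
      rw [he0]
      simp [div_self (hdvpos j).ne']
    rw [h1, one_mul, hfilters, hN]
    have h2 : ∀ j ∈ Finset.univ.filter (fun j : Fin n => k ≤ (j:ℕ)),
        Real.sqrt (dv j / Ee j) * XX j
          = (Real.sqrt (1 + (ℓ:ℝ)*μ*lam j/σ))⁻¹ *
            Real.exp (-((μ^2/(2*σ)) * (((ℓ:ℝ)*μ*lam j)/((ℓ:ℝ)*μ*lam j+σ)) *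
              (b ⬝ᵥ (A *ᵥ (L⁻¹ *ᵥ v j)))^2)) := by
      intro j hj
      have hjk : k ≤ (j:ℕ) := (Finset.mem_filter.mp hj).2
      have hnl : ¬ (j:ℕ) < k := not_lt.mpr hjk
      have hdvj : dv j = σ := by rw [hdv]; simp [hnl]
      have hevj : ev j = μ * lam j := by rw [hev]; simp [hnl]
      have hyhj : yh j = μ * (σ⁻¹ * cc j) := by rw [hyhdef]; dsimp only; rw [hdvj]
      have hml : (0:ℝ) ≤ (ℓ:ℝ)*μ*lam j :=
        mul_nonneg (mul_nonneg (Nat.cast_nonneg ℓ) hμ.le) (hlam_nonneg j)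
      have hden : (0:ℝ) < (ℓ:ℝ)*μ*lam j + σ := by linarith
      simp only [hXX, hEe]
      rw [hdvj, hevj, hyhj, ← hccj j]
      have hpos2 : (0:ℝ) < σ + (ℓ:ℝ)*(μ*lam j) := by
        have : (ℓ:ℝ)*(μ*lam j) = (ℓ:ℝ)*μ*lam j := by ring
        rw [this]; linarith
      congr 1
      · have e1 : 1 + (ℓ:ℝ)*μ*lam j/σ = (σ + (ℓ:ℝ)*(μ*lam j))/σ := by
          field_simp
        have hfrac : σ / (σ + (ℓ:ℝ)*(μ*lam j)) = (1 + (ℓ:ℝ)*μ*lam j/σ)⁻¹ := by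
          rw [e1, inv_div]
        rw [hfrac, Real.sqrt_inv]
      · congr 1
        exact expaux σ μ (lam j) (cc j) (ℓ:ℝ) hσ hden
    rw [Finset.prod_congr rfl h2, Finset.prod_mul_distrib, Finset.prod_inv_distrib,
      ← Real.exp_sum]
    have hsum2 : ∑ j ∈ Finset.univ.filter (fun j : Fin n => k ≤ (j:ℕ)),
        -((μ^2/(2*σ)) * (((ℓ:ℝ)*μ*lam j)/((ℓ:ℝ)*μ*lam j+σ)) *
          (b ⬝ᵥ (A *ᵥ (L⁻¹ *ᵥ v j)))^2)
        = -((μ^2/(2*σ)) * ∑ j ∈ Finset.univ.filter (fun j : Fin n => k ≤ (j:ℕ)),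
            (((ℓ:ℝ)*μ*lam j)/((ℓ:ℝ)*μ*lam j+σ)) * (b ⬝ᵥ (A *ᵥ (L⁻¹ *ᵥ v j)))^2) := by
      rw [Finset.mul_sum, ← Finset.sum_neg_distrib]
      exact Finset.sum_congr rfl fun j _ => by ring
    rw [hsum2, Real.exp_neg, one_div, mul_inv]
    ring
  have main2 : (∫ z, w z ^ ℓ * gfun z) = 1 / N ℓ := by
    rw [hcov, hint, hprod1, hstepE]
  refine ⟨?_, main2⟩
  have hconv : ∀ z, η z x ^ ℓ * gfun z = (w z ^ ℓ * gfun z) * (w x ^ ℓ)⁻¹ := by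
    intro z
    rw [hη, div_pow, div_eq_mul_inv]
    ring
  simp_rw [hconv]
  rw [MeasureTheory.integral_mul_const, main2, one_div, one_div, mul_inv]
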